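/- Let p be a noncrossing pair partition of {1,...,2k} (k ≥ 2) with a block {ν, ν+1} where ν is even, and let p̃ be the partition of {1,...,2k} \ {ν, ν+1} obtained by removing this block. Then |p̃ ∨ m̃| = |p ∨ m| and |p̃ ∨ ñ| = |p ∨ n| − 1, where m, n are the canonical interval pair partitions of {1,...,2k} and m̃, ñ are their analogues on {1,...,2k} \ {ν, ν+1} (joining ν−1 with ν+2 appropriately). -/
import Mathlib


/-- A partition (as a setoid) of `Fin N` is a pair partition if every block has two elements. -/
def IsPairPartition {N : ℕ} (p : Setoid (Fin N)) : Prop :=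
  ∀ c ∈ p.classes, c.ncard = 2

/-- A partition of `Fin N` is noncrossing if there are no `p1 < q1 < p2 < q2` with
`p1 ~ p2`, `q1 ~ q2` but `p1 ≁ q1`. -/
def IsNoncrossing {N : ℕ} (p : Setoid (Fin N)) : Prop :=
  ¬ ∃ p1 q1 p2 q2 : Fin N, p1 < q1 ∧ q1 < p2 ∧ p2 < q2 ∧
      p.r p1 p2 ∧ p.r q1 q2 ∧ ¬ p.r p1 q1

/-- The pair partition `{{1,2},{3,4},…,{2k-1,2k}}` (0-indexed: `{0,1},{2,3},…`). -/
def mSetoid (k : ℕ) : Setoid (Fin (2 * k)) :=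
  Setoid.ker (fun i => i.val / 2)

/-- The cyclic pair partition `{{2,3},{4,5},…,{2k,1}}` (0-indexed: `{1,2},{3,4},…,{2k-1,0}`). -/
def nSetoid (k : ℕ) : Setoid (Fin (2 * k)) :=
  Setoid.ker (fun i => ((i.val + 1) / 2) % k)

/-- The partition of `Fin N` whose only non-singleton block is `{a, b}`. -/
def pairSetoid {N : ℕ} (a b : Fin N) : Setoid (Fin N) :=
  Setoid.ker (fun i => if i = a then b else i)

section Aux

variable {α β : Type*}

lemma comap_mono' (f : α → β) {s t : Setoid β} (h : s ≤ t) :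
    Setoid.comap f s ≤ Setoid.comap f t := by
  intro x y hxy
  rw [Setoid.comap_rel] at *
  exact h hxy

lemma classes_comap_subtype (S : Set α) (q : Setoid α) :
    (Setoid.comap (Subtype.val : S → α) q).classes
      = (fun c => (Subtype.val ⁻¹' c : Set S)) '' {c | c ∈ q.classes ∧ (c ∩ S).Nonempty} := by
  ext d
  constructor
  · rintro ⟨y, rfl⟩
    refine ⟨{x | q x y.val}, ⟨q.mem_classes y.val, ⟨y.val, q.refl' _, y.prop⟩⟩, ?_⟩
    rfl
  · rintro ⟨c, ⟨⟨z, rfl⟩, ⟨w, hw1, hw2⟩⟩, rfl⟩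
    refine ⟨⟨w, hw2⟩, ?_⟩
    ext x
    constructor
    · intro hx
      exact q.trans' hx (q.symm' hw1)
    · intro hx
      exact q.trans' hx hw1

lemma ncard_classes_comap_subtype (S : Set α) (q : Setoid α) :
    (Setoid.comap (Subtype.val : S → α) q).classes.ncard
      = {c | c ∈ q.classes ∧ (c ∩ S).Nonempty}.ncard := by
  rw [classes_comap_subtype]
  apply Set.ncard_image_of_injOn
  rintro c ⟨hc, w, hw1, hw2⟩ c' ⟨hc', -⟩ h
  have h' : (Subtype.val ⁻¹' c : Set S) = Subtype.val ⁻¹' c' := h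
  have hmem : (⟨w, hw2⟩ : S) ∈ (Subtype.val ⁻¹' c : Set S) := hw1
  rw [h'] at hmem
  exact Setoid.eq_of_mem_classes hc hw1 hc' hmem

end Aux

/-- Removing a nearest-neighbour block `{ν, ν+1}` (ν even, 1-based; here 0-based the
block is `{a, a+1}` with `a` odd) from a noncrossing pair partition `p` leaves
`|p̃ ∨ m̃| = |p ∨ m|` and `|p̃ ∨ ñ| = |p ∨ n| - 1`, where `m̃` is `m` with the blocks
containing `ν, ν+1` replaced by `{ν-1, ν+2}`, and `ñ` consists of the blocks of `n`
not containing `ν, ν+1`; partitions of the complement are realized by `Setoid.comap`. -/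
theorem remove_nearest_neighbour_pair (k : ℕ) (hk : 2 ≤ k) (p : Setoid (Fin (2 * k)))
    (hpair : IsPairPartition p) (hnc : IsNoncrossing p)
    (a b : Fin (2 * k)) (ha : Odd a.val) (hb : b.val = a.val + 1) (hblock : p.r a b) :
    ((Setoid.comap (Subtype.val : ({a, b}ᶜ : Set (Fin (2 * k))) → Fin (2 * k)) p ⊔
        Setoid.comap Subtype.val (mSetoid k ⊔ pairSetoid a b)).classes.ncard
      = (p ⊔ mSetoid k).classes.ncard)
    ∧ ((Setoid.comap (Subtype.val : ({a, b}ᶜ : Set (Fin (2 * k))) → Fin (2 * k)) p ⊔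
        Setoid.comap Subtype.val (nSetoid k)).classes.ncard
      = (p ⊔ nSetoid k).classes.ncard - 1) := by
  obtain ⟨j, hj⟩ := ha
  have hblt : b.val < 2 * k := b.isLt
  have halt : a.val < 2 * k := a.isLt
  -- basic numeric facts
  have hA2 : a.val + 2 < 2 * k := by omega
  have hab : a ≠ b := by
    intro h; rw [h] at hb; omega
  set S : Set (Fin (2 * k)) := ({a, b}ᶜ : Set (Fin (2 * k))) with hS
  have hmemS : ∀ x : Fin (2 * k), x ∈ S ↔ ¬(x = a ∨ x = b) := by
    intro x; simp [hS]
  -- the block {a, b} of p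
  have pblock : ∀ x, p x a → x = a ∨ x = b := by
    intro x hx
    have hc : {x | p x a} ∈ p.classes := p.mem_classes a
    have hsub : ({a, b} : Set (Fin (2 * k))) ⊆ {x | p x a} := by
      intro y hy
      simp only [Set.mem_insert_iff, Set.mem_singleton_iff] at hy
      rcases hy with h | h
      · rw [h]; exact p.refl' a
      · rw [h]; exact p.symm' hblock
    have heq : ({a, b} : Set (Fin (2 * k))) = {x | p x a} := by
      refine Set.eq_of_subset_of_ncard_le hsub (le_of_eq ?_) (Set.toFinite _)
      rw [hpair _ hc, Set.ncard_pair hab]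
    have : x ∈ ({a, b} : Set (Fin (2 * k))) := heq ▸ hx
    simpa using this
  have pblock' : ∀ x y, p x y → (x = a ∨ x = b) → (y = a ∨ y = b) := by
    rintro x y hxy (rfl | rfl)
    · exact pblock y (p.symm' hxy)
    · exact pblock y (p.trans' (p.symm' hxy) (p.symm' hblock))
  -- elements a-1 and a+2
  set a' : Fin (2 * k) := ⟨a.val - 1, by omega⟩ with ha'
  have ha'v : a'.val = a.val - 1 := rfl
  have ha'S : a' ∈ S := by
    rw [hmemS]
    rintro (h | h)
    · have := congrArg Fin.val h
      rw [ha'v] at this; omega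
    · have := congrArg Fin.val h
      rw [ha'v, hb] at this; omega
  -- the n-block of a is {a, b}
  have hnrel : ∀ x y : Fin (2 * k), nSetoid k x y ↔ ((x.val + 1) / 2) % k = ((y.val + 1) / 2) % k :=
    fun x y => Iff.rfl
  have hnab : nSetoid k a b := by
    rw [hnrel]
    congr 1
    omega
  have nblock : ∀ x, nSetoid k a x → x = a ∨ x = b := by
    intro x hx
    rw [hnrel] at hx
    have hj1 : (a.val + 1) / 2 = j + 1 := by omega
    have hjk : j + 1 < k := by omega
    have hL : ((a.val + 1) / 2) % k = j + 1 := by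
      rw [hj1]; exact Nat.mod_eq_of_lt hjk
    by_cases hx2k : x.val = 2 * k - 1
    · exfalso
      have : (x.val + 1) / 2 = k := by omega
      rw [hL, this, Nat.mod_self] at hx
      omega
    · have hxlt : (x.val + 1) / 2 < k := by omega
      rw [hL, Nat.mod_eq_of_lt hxlt] at hx
      have : x.val = a.val ∨ x.val = b.val := by omega
      rcases this with h | h
      · exact Or.inl (Fin.ext h)
      · exact Or.inr (Fin.ext h)
  have nblock' : ∀ x y, nSetoid k x y → (x = a ∨ x = b) → (y = a ∨ y = b) := by
    rintro x y hxy (rfl | rfl)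
    · exact nblock y hxy
    · exact nblock y ((nSetoid k).trans' hnab hxy)
  -- the merged-block version of m, as a kernel
  set g : Fin (2 * k) → ℕ := fun x => if x.val / 2 = j then j + 1 else x.val / 2 with hg
  have hq' : mSetoid k ⊔ pairSetoid a b = Setoid.ker g := by
    apply le_antisymm
    · apply sup_le
      · intro x y hxy
        have hxy' : x.val / 2 = y.val / 2 := hxy
        show g x = g y
        simp [hg, hxy']
      · intro x y hxy
        have hxy' : (if x = a then b else x) = (if y = a then b else y) := hxy
        show g x = g y
        have hgab : g a = g b := by
          simp only [hg]
          rw [if_pos (show a.val / 2 = j by omega), if_neg (show ¬ b.val / 2 = j by omega)]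
          omega
        by_cases hxa : x = a <;> by_cases hya : y = a
        · rw [hxa, hya]
        · rw [if_pos hxa, if_neg hya] at hxy'
          rw [hxa, ← hxy']; exact hgab
        · rw [if_neg hxa, if_pos hya] at hxy'
          rw [hya, hxy']; exact hgab.symm
        · rw [if_neg hxa, if_neg hya] at hxy'
          rw [hxy']
    · intro x y hxy
      have hxy' : g x = g y := hxy
      have hm : ∀ u v : Fin (2 * k), u.val / 2 = v.val / 2 →
          (mSetoid k ⊔ pairSetoid a b) u v := fun u v h =>
        (le_sup_left : mSetoid k ≤ _) h
      have hpr : (mSetoid k ⊔ pairSetoid a b) a b := by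
        refine (le_sup_right : pairSetoid a b ≤ _) ?_
        show (if a = a then b else a) = (if b = a then b else b)
        rw [if_pos rfl, if_neg (Ne.symm hab)]
      simp only [hg] at hxy'
      split_ifs at hxy' with h1 h2 h2
      · exact hm x y (by omega)
      · -- x in block j, y in block j+1
        refine ((mSetoid k ⊔ pairSetoid a b).trans' (hm x a (by omega)) ?_)
        refine ((mSetoid k ⊔ pairSetoid a b).trans' hpr ?_)
        exact hm b y (by omega)
      · refine ((mSetoid k ⊔ pairSetoid a b).trans' (hm x b (by omega)) ?_)
        refine ((mSetoid k ⊔ pairSetoid a b).trans' ((mSetoid k ⊔ pairSetoid a b).symm' hpr) ?_)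
        exact hm a y (by omega)
      · exact hm x y hxy'
  have hga : g a = j + 1 := by simp only [hg]; rw [if_pos (by omega)]
  have hgb : g b = j + 1 := by
    simp only [hg]
    rw [hb, if_neg (by omega)]
    omega
  have hga' : g a' = j + 1 := by
    have hv : a'.val / 2 = j := by rw [ha'v]; omega
    simp only [hg]
    rw [if_pos hv]
  -- the retraction h
  set h : Fin (2 * k) → S := fun x =>
    if hx : x = a ∨ x = b then ⟨a', ha'S⟩ else ⟨x, (hmemS x).mpr hx⟩ with hh
  have hhS : ∀ (x : Fin (2 * k)) (hx : x ∈ S), h x = ⟨x, hx⟩ := by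
    intro x hx
    simp only [hh]
    rw [dif_neg ((hmemS x).mp hx)]
  -- Claim A : comap p ⊔ comap (m ⊔ pair) = comap (p ⊔ (m ⊔ pair))
  have claimA : Setoid.comap (Subtype.val : S → Fin (2 * k)) p ⊔
      Setoid.comap Subtype.val (mSetoid k ⊔ pairSetoid a b)
      = Setoid.comap Subtype.val (p ⊔ (mSetoid k ⊔ pairSetoid a b)) := by
    apply le_antisymm
    · exact sup_le (comap_mono' _ le_sup_left) (comap_mono' _ le_sup_right)
    · set J := Setoid.comap (Subtype.val : S → Fin (2 * k)) p ⊔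
        Setoid.comap Subtype.val (mSetoid k ⊔ pairSetoid a b) with hJ
      have key : p ⊔ (mSetoid k ⊔ pairSetoid a b) ≤ Setoid.comap h J := by
        apply sup_le
        · intro x y hxy
          show J (h x) (h y)
          by_cases hx : x = a ∨ x = b
          · have hy : y = a ∨ y = b := pblock' x y hxy hx
            simp only [hh, dif_pos hx, dif_pos hy]
            exact J.refl' _
          · have hy : ¬(y = a ∨ y = b) := fun hy =>
              hx (pblock' y x (p.symm' hxy) hy)
            simp only [hh, dif_neg hx, dif_neg hy]
            exact (le_sup_left : Setoid.comap (Subtype.val : S → Fin (2 * k)) p ≤ J)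
              (show p x y from hxy)
        · rw [hq']
          intro x y hxy
          have hgxy : g x = g y := hxy
          show J (h x) (h y)
          have hq'' : ∀ (u v : S), g u.val = g v.val → J u v := by
            intro u v huv
            refine (le_sup_right : Setoid.comap (Subtype.val : S → Fin (2 * k))
              (mSetoid k ⊔ pairSetoid a b) ≤ J) ?_
            show (mSetoid k ⊔ pairSetoid a b) u.val v.val
            rw [hq']
            exact huv
          have hgab : ∀ x : Fin (2 * k), (x = a ∨ x = b) → g x = j + 1 := by
            rintro x (rfl | rfl); exacts [hga, hgb]
          by_cases hx : x = a ∨ x = b <;> by_cases hy : y = a ∨ y = b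
          · simp only [hh, dif_pos hx, dif_pos hy]
            exact J.refl' _
          · simp only [hh, dif_pos hx, dif_neg hy]
            refine hq'' _ _ ?_
            show g a' = g y
            rw [hga', ← hgab x hx]; exact hgxy
          · simp only [hh, dif_neg hx, dif_pos hy]
            refine hq'' _ _ ?_
            show g x = g a'
            rw [hga', ← hgab y hy]; exact hgxy
          · simp only [hh, dif_neg hx, dif_neg hy]
            exact hq'' _ _ hgxy
      intro x y hxy
      rw [Setoid.comap_rel] at hxy
      have this2 : J (h x.val) (h y.val) := key hxy
      rw [hhS x.val x.prop, hhS y.val y.prop] at this2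
      exact this2
  -- Claim B : comap p ⊔ comap n = comap (p ⊔ n)
  have claimB : Setoid.comap (Subtype.val : S → Fin (2 * k)) p ⊔
      Setoid.comap Subtype.val (nSetoid k)
      = Setoid.comap Subtype.val (p ⊔ nSetoid k) := by
    apply le_antisymm
    · exact sup_le (comap_mono' _ le_sup_left) (comap_mono' _ le_sup_right)
    · set J := Setoid.comap (Subtype.val : S → Fin (2 * k)) p ⊔
        Setoid.comap Subtype.val (nSetoid k) with hJ
      have key : p ⊔ nSetoid k ≤ Setoid.comap h J := by
        apply sup_le
        · intro x y hxy
          show J (h x) (h y)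
          by_cases hx : x = a ∨ x = b
          · have hy : y = a ∨ y = b := pblock' x y hxy hx
            simp only [hh, dif_pos hx, dif_pos hy]
            exact J.refl' _
          · have hy : ¬(y = a ∨ y = b) := fun hy =>
              hx (pblock' y x (p.symm' hxy) hy)
            simp only [hh, dif_neg hx, dif_neg hy]
            exact (le_sup_left : Setoid.comap (Subtype.val : S → Fin (2 * k)) p ≤ J)
              (show p x y from hxy)
        · intro x y hxy
          show J (h x) (h y)
          by_cases hx : x = a ∨ x = b
          · have hy : y = a ∨ y = b := nblock' x y hxy hx
            simp only [hh, dif_pos hx, dif_pos hy]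
            exact J.refl' _
          · have hy : ¬(y = a ∨ y = b) := fun hy =>
              hx (nblock' y x ((nSetoid k).symm' hxy) hy)
            simp only [hh, dif_neg hx, dif_neg hy]
            exact (le_sup_right : Setoid.comap (Subtype.val : S → Fin (2 * k))
              (nSetoid k) ≤ J) (show nSetoid k x y from hxy)
      intro x y hxy
      rw [Setoid.comap_rel] at hxy
      have this2 : J (h x.val) (h y.val) := key hxy
      rw [hhS x.val x.prop, hhS y.val y.prop] at this2
      exact this2
  constructor
  · -- first equality
    rw [claimA, ncard_classes_comap_subtype]
    have hsupeq : p ⊔ (mSetoid k ⊔ pairSetoid a b) = p ⊔ mSetoid k := by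
      have hple : pairSetoid a b ≤ p := by
        intro x y hxy
        have hxy' : (if x = a then b else x) = (if y = a then b else y) := hxy
        by_cases hxa : x = a <;> by_cases hya : y = a
        · rw [hxa, hya]
        · rw [if_pos hxa, if_neg hya] at hxy'
          rw [hxa, ← hxy']; exact hblock
        · rw [if_neg hxa, if_pos hya] at hxy'
          rw [hya, hxy']; exact p.symm' hblock
        · rw [if_neg hxa, if_neg hya] at hxy'
          rw [hxy']
      apply le_antisymm
      · exact sup_le le_sup_left (sup_le le_sup_right (hple.trans le_sup_left))
      · exact sup_le le_sup_left (le_sup_right.trans (sup_le_sup_left le_sup_left p))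
    rw [hsupeq]
    congr 1
    ext c
    simp only [Set.mem_setOf_eq, and_iff_left_iff_imp]
    rintro ⟨y, rfl⟩
    by_cases hy : y = a ∨ y = b
    · refine ⟨a', ?_, ha'S⟩
      show (p ⊔ mSetoid k) a' y
      have h1 : (p ⊔ mSetoid k) a' a := by
        refine (le_sup_right : mSetoid k ≤ p ⊔ mSetoid k) ?_
        show a'.val / 2 = a.val / 2
        rw [ha'v]; omega
      rcases hy with h | h
      · rw [h]; exact h1
      · rw [h]; exact (p ⊔ mSetoid k).trans' h1 ((le_sup_left : p ≤ p ⊔ mSetoid k) hblock)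
    · exact ⟨y, (p ⊔ mSetoid k).refl' y, (hmemS y).mpr hy⟩
  · -- second equality
    rw [claimB, ncard_classes_comap_subtype]
    have habclass : {x | (p ⊔ nSetoid k) x a} = ({a, b} : Set (Fin (2 * k))) := by
      have hR : p ⊔ nSetoid k ≤ Setoid.ker (fun x : Fin (2 * k) => x = a ∨ x = b) := by
        apply sup_le
        · intro x y hxy
          show (x = a ∨ x = b) = (y = a ∨ y = b)
          exact propext ⟨pblock' x y hxy, pblock' y x (p.symm' hxy)⟩
        · intro x y hxy
          show (x = a ∨ x = b) = (y = a ∨ y = b)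
          exact propext ⟨nblock' x y hxy, nblock' y x ((nSetoid k).symm' hxy)⟩
      ext x
      simp only [Set.mem_setOf_eq, Set.mem_insert_iff, Set.mem_singleton_iff]
      constructor
      · intro hx
        have := hR hx
        have h2 : (x = a ∨ x = b) = (a = a ∨ a = b) := this
        rw [h2]; exact Or.inl rfl
      · rintro (rfl | rfl)
        · exact (p ⊔ nSetoid k).refl' x
        · exact (le_sup_left : p ≤ p ⊔ nSetoid k) (p.symm' hblock)
    have hsetdiff : {c | c ∈ (p ⊔ nSetoid k).classes ∧ (c ∩ S).Nonempty}
        = (p ⊔ nSetoid k).classes \ {({a, b} : Set (Fin (2 * k)))} := by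
      ext c
      simp only [Set.mem_setOf_eq, Set.mem_diff, Set.mem_singleton_iff]
      constructor
      · rintro ⟨hc, w, hw1, hw2⟩
        refine ⟨hc, ?_⟩
        rintro rfl
        rw [hmemS] at hw2
        exact hw2 (by simpa using hw1)
      · rintro ⟨hc, hne⟩
        refine ⟨hc, ?_⟩
        obtain ⟨y, rfl⟩ := hc
        by_cases hy : y = a ∨ y = b
        · exfalso
          apply hne
          rw [← habclass]
          have hya : (p ⊔ nSetoid k) y a := by
            rcases hy with h | h
            · rw [h]
            · rw [h]; exact (le_sup_left : p ≤ p ⊔ nSetoid k) (p.symm' hblock)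
          ext x
          exact ⟨fun hx => (p ⊔ nSetoid k).trans' hx hya,
            fun hx => (p ⊔ nSetoid k).trans' hx ((p ⊔ nSetoid k).symm' hya)⟩
        · exact ⟨y, (p ⊔ nSetoid k).refl' y, (hmemS y).mpr hy⟩
    rw [hsetdiff]
    have habmem : ({a, b} : Set (Fin (2 * k))) ∈ (p ⊔ nSetoid k).classes := by
      rw [← habclass]
      exact (p ⊔ nSetoid k).mem_classes a
    rw [Set.ncard_diff_singleton_of_mem habmem]
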